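/- Let k ≤ −1 be an integer, let f be as below, let U^0(k) = {γ ∈ ℝ^n : γ_i < 0 for all i, Σ_{i=1}^n γ_i > k}, and define g_k : U^0(k) → ℝ by g_k(γ) = (−k) · f(γ/(−k)). Then with F_j(r) = r_j²/(1 + Σ_{i=1}^n r_i²) one has the equality of subsets of ℝ^n × ℝ^n: {(∇g_k(γ), γ) : γ ∈ U^0(k)} = {((log r_1, …, log r_n), k·F(r)) : r ∈ (ℝ_{>0})^n}. (That is, the lift of the T-dual Lagrangian L(O(k), h_k) = {(r, k·F(r))} is the graph of the differential of a potential obtained from f by rescaling the domain by −k.) -/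

import Mathlib

open scoped BigOperators

/-- The open cell `T = {γ ∈ ℝⁿ : γᵢ < 0, ∑ γᵢ > −1}`. -/
def openCellT (n : ℕ) : Set (Fin n → ℝ) := {γ | (∀ i, γ i < 0) ∧ -1 < ∑ i, γ i}

/-- The potential `f` of the T-dual Lagrangian `L(O(−1), h_{−1})`. -/
noncomputable def potentialF (n : ℕ) (γ : Fin n → ℝ) : ℝ :=
  (1 / 2) * ∑ i, γ i * Real.log (-γ i)
    - (1 / 2) * (1 + ∑ j, γ j) * Real.log (1 + ∑ j, γ j)

/-- The moment map image of the torus orbit `L(r)`: `F_j(r) = r_j² / (1 + ∑ r_i²)`. -/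
noncomputable def momentOfOrbit (n : ℕ) (r : Fin n → ℝ) : Fin n → ℝ :=
  fun j => r j ^ 2 / (1 + ∑ i, r i ^ 2)

lemma aux_xlog (c x : ℝ) (hc : 0 < c) (hx : x < 0) :
    HasDerivAt (fun x : ℝ => (1/2) * (x * Real.log (-x / c)))
      ((1/2) * (Real.log (-x / c) + 1)) x := by
  have hne : -x / c ≠ 0 := ne_of_gt (div_pos (by linarith) hc)
  have h1 : HasDerivAt (fun x : ℝ => -x / c) (-1 / c) x := by
    simpa using ((hasDerivAt_id x).neg.div_const c)
  have h2 := h1.log hne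
  have h3 := (hasDerivAt_id x).mul h2
  have h4 := h3.const_mul (1/2 : ℝ)
  refine h4.congr_deriv ?_
  have hx0 : x ≠ 0 := ne_of_lt hx
  simp only [id]
  field_simp

lemma aux_ylog (c y : ℝ) (hc : 0 < c) (hy : 0 < c + y) :
    HasDerivAt (fun y : ℝ => (1/2) * ((c + y) * Real.log ((c + y) / c)))
      ((1/2) * (Real.log ((c + y) / c) + 1)) y := by
  have hne : (c + y) / c ≠ 0 := ne_of_gt (div_pos hy hc)
  have h1 : HasDerivAt (fun y : ℝ => c + y) 1 y := (hasDerivAt_id y).const_add c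
  have h0 : HasDerivAt (fun y : ℝ => (c + y) / c) (1 / c) y := h1.div_const c
  have h2 := h0.log hne
  have h3 := h1.mul h2
  have h4 := h3.const_mul (1/2 : ℝ)
  refine h4.congr_deriv ?_
  have hcy : c + y ≠ 0 := ne_of_gt hy
  field_simp

lemma key_fderiv (n : ℕ) (c : ℝ) (hc : 0 < c) (γ : Fin n → ℝ) (hγ : ∀ i, γ i < 0)
    (hs : 0 < c + ∑ j, γ j) (g : (Fin n → ℝ) → ℝ)
    (hgG : g = fun γ => (∑ i, (1/2) * (γ i * Real.log (-γ i / c)))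
      - (1/2) * ((c + ∑ j, γ j) * Real.log ((c + ∑ j, γ j) / c))) (i : Fin n) :
    fderiv ℝ g γ (Pi.single i 1) =
      (1/2) * Real.log (-γ i / (c + ∑ j, γ j)) := by
  subst hgG
  set P : Fin n → (Fin n → ℝ) →L[ℝ] ℝ := fun j => ContinuousLinearMap.proj j with hP
  have hA : ∀ j : Fin n, HasFDerivAt (fun γ : Fin n → ℝ => (1/2) * (γ j * Real.log (-γ j / c)))
      (((1/2) * (Real.log (-γ j / c) + 1)) • P j) γ := by
    intro j
    exact (aux_xlog c (γ j) hc (hγ j)).comp_hasFDerivAt (f := fun γ : Fin n → ℝ => γ j) γ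
      (P j).hasFDerivAt
  have hB : HasFDerivAt (fun γ : Fin n → ℝ => ∑ j, γ j) (∑ j, P j) γ :=
    HasFDerivAt.fun_sum (fun j _ => (P j).hasFDerivAt)
  have hC := (aux_ylog c (∑ j, γ j) hc hs).comp_hasFDerivAt γ hB
  have hG : HasFDerivAt
      (fun γ : Fin n → ℝ => (∑ i, (1/2) * (γ i * Real.log (-γ i / c)))
        - (1/2) * ((c + ∑ j, γ j) * Real.log ((c + ∑ j, γ j) / c)))
      ((∑ j, ((1/2) * (Real.log (-γ j / c) + 1)) • P j)
        - ((1/2) * (Real.log ((c + ∑ j, γ j) / c) + 1)) • ∑ j, P j) γ :=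
    (HasFDerivAt.fun_sum (fun j (_ : j ∈ Finset.univ) => hA j)).fun_sub hC
  rw [hG.fderiv]
  have e1 : ∀ j : Fin n, P j (Pi.single i 1) = if j = i then (1:ℝ) else 0 := by
    intro j; simp [hP, Pi.single_apply]
  simp only [ContinuousLinearMap.sub_apply, ContinuousLinearMap.sum_apply,
    ContinuousLinearMap.smul_apply, e1, smul_eq_mul, mul_ite, mul_one, mul_zero,
    Finset.sum_ite_eq', Finset.mem_univ, if_true]
  have harg : -γ i / (c + ∑ j, γ j) = (-γ i / c) / ((c + ∑ j, γ j) / c) := by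
    have h1 : c ≠ 0 := ne_of_gt hc
    have h2 : c + ∑ j, γ j ≠ 0 := ne_of_gt hs
    field_simp
  rw [harg, Real.log_div (ne_of_gt (div_pos (by linarith [hγ i]) hc))
    (ne_of_gt (div_pos hs hc))]
  ring

theorem stmt_7 (n : ℕ) (hn : 1 ≤ n) (k : ℤ) (hk : k ≤ -1)
    -- the open cell `U⁰(k) = {γ : γᵢ < 0, ∑ γᵢ > k}`
    (U : Set (Fin n → ℝ)) (hU : U = {γ | (∀ i, γ i < 0) ∧ (k : ℝ) < ∑ i, γ i})
    -- the rescaled potential `g_k(γ) = (−k) · f(γ/(−k))`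
    (g : (Fin n → ℝ) → ℝ)
    (hg : ∀ γ, g γ = (-(k : ℝ)) * potentialF n (fun i => γ i / (-(k : ℝ)))) :
    {p : (Fin n → ℝ) × (Fin n → ℝ) | ∃ γ ∈ U,
        p = (fun i => fderiv ℝ g γ (Pi.single i 1), γ)} =
      {p : (Fin n → ℝ) × (Fin n → ℝ) | ∃ r : Fin n → ℝ, (∀ i, 0 < r i) ∧
        p = (fun i => Real.log (r i), fun j => (k : ℝ) * momentOfOrbit n r j)} := by
  have hk1 : (k : ℝ) ≤ -1 := by exact_mod_cast hk
  set c : ℝ := -(k : ℝ) with hcdef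
  have hc : 0 < c := by rw [hcdef]; linarith
  have hc0 : c ≠ 0 := ne_of_gt hc
  have hkc : (k : ℝ) = -c := by rw [hcdef]; ring
  have hgG : g = fun γ => (∑ i, (1/2) * (γ i * Real.log (-γ i / c)))
      - (1/2) * ((c + ∑ j, γ j) * Real.log ((c + ∑ j, γ j) / c)) := by
    funext γ
    rw [hg]
    unfold potentialF
    have e1 : ∀ x : ℝ, -(x / c) = -x / c := fun x => (neg_div c x).symm
    have e2 : (1 : ℝ) + ∑ j, γ j / c = (c + ∑ j, γ j) / c := by
      rw [← Finset.sum_div]; field_simp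
    simp only [e1, e2]
    simp only [div_mul_eq_mul_div, ← Finset.sum_div]
    field_simp
  ext p
  simp only [Set.mem_setOf_eq, hU]
  constructor
  · rintro ⟨γ, ⟨hγneg, hγsum⟩, rfl⟩
    have hS : 0 < c + ∑ j, γ j := by rw [hkc] at hγsum; linarith
    have hargpos : ∀ i, 0 ≤ -γ i / (c + ∑ j, γ j) :=
      fun i => le_of_lt (div_pos (by linarith [hγneg i]) hS)
    refine ⟨fun i => Real.sqrt (-γ i / (c + ∑ j, γ j)),
      fun i => Real.sqrt_pos.mpr (div_pos (by linarith [hγneg i]) hS), ?_⟩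
    have hsq : ∀ i, (Real.sqrt (-γ i / (c + ∑ j, γ j)))^2 = -γ i / (c + ∑ j, γ j) :=
      fun i => Real.sq_sqrt (hargpos i)
    have h1 : (fun i => fderiv ℝ g γ (Pi.single i 1))
        = fun i => Real.log (Real.sqrt (-γ i / (c + ∑ j, γ j))) := by
      funext i
      rw [key_fderiv n c hc γ hγneg hS g hgG i, Real.log_sqrt (hargpos i)]
      ring
    have h2 : γ = fun j => (k : ℝ) *
        momentOfOrbit n (fun i => Real.sqrt (-γ i / (c + ∑ j, γ j))) j := by
      funext j
      unfold momentOfOrbit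
      simp only [hsq, ← Finset.sum_div]
      have hsn : ∑ i, -γ i = -∑ i, γ i := by simp
      rw [hsn]
      have e3 : (1 : ℝ) + (-∑ i, γ i) / (c + ∑ j, γ j) = c / (c + ∑ j, γ j) := by
        field_simp
        ring
      rw [e3, hkc]
      field_simp
    rw [h1, ← h2]
  · rintro ⟨r, hr, rfl⟩
    have hRpos : 0 < 1 + ∑ i, r i ^ 2 := by positivity
    have hRnn : 0 ≤ ∑ i, r i ^ 2 := by positivity
    set γ : Fin n → ℝ := fun j => (k : ℝ) * momentOfOrbit n r j with hγdef
    have hγ : ∀ j, γ j = -c * (r j ^ 2 / (1 + ∑ i, r i ^ 2)) := by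
      intro j; rw [hγdef]; unfold momentOfOrbit; rw [hkc]
    have hγneg : ∀ j, γ j < 0 := by
      intro j; rw [hγ j]
      exact mul_neg_of_neg_of_pos (by linarith) (div_pos (pow_pos (hr j) 2) hRpos)
    have hSsum : ∑ j, γ j = -c * ((∑ i, r i ^ 2) / (1 + ∑ i, r i ^ 2)) := by
      simp only [hγ, ← Finset.mul_sum, ← Finset.sum_div]
    have hfrac : (∑ i, r i ^ 2) / (1 + ∑ i, r i ^ 2) < 1 := by
      rw [div_lt_one hRpos]; linarith
    have hfracnn : 0 ≤ (∑ i, r i ^ 2) / (1 + ∑ i, r i ^ 2) :=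
      div_nonneg hRnn (le_of_lt hRpos)
    have hγsum : (k : ℝ) < ∑ j, γ j := by
      rw [hkc, hSsum]
      nlinarith [mul_pos hc (sub_pos.mpr hfrac)]
    have hS : 0 < c + ∑ j, γ j := by rw [hkc] at hγsum; linarith
    have hcs : c + ∑ j, γ j = c / (1 + ∑ i, r i ^ 2) := by
      rw [hSsum]; field_simp; ring
    refine ⟨γ, ⟨hγneg, hγsum⟩, ?_⟩
    have h1 : (fun i => Real.log (r i)) = fun i => fderiv ℝ g γ (Pi.single i 1) := by
      funext i
      rw [key_fderiv n c hc γ hγneg hS g hgG i]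
      have harg : -γ i / (c + ∑ j, γ j) = r i ^ 2 := by
        rw [hγ i, hcs]
        field_simp
      rw [harg, Real.log_pow]
      push_cast
      ring
    rw [h1]
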